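/- Let γ ≥ 0 and α ∈ [γ, 7γ/6]. Then there exist δ ∈ [0,1] and block-rotation matrices k, k' ∈ SO(3) of the form diag(R,1) with R ∈ SO(2) (rotation in the first two coordinates) such that D_{2γ−α} x_δ D_α = k · diag(e^γ, 1, e^{−γ}) · k', where D_β = diag(e^β, e^{−β/2}, e^{−β/2}) and x_δ is the rotation with first column (δ, √(1−δ²), 0), second column (−√(1−δ²), δ, 0), third column (0,0,1). Moreover δ ≤ e^{−γ}, ‖k − I‖ ≤ 2e^{−γ/4}, and ‖k' − I‖ ≤ 2e^{−γ/4}. -/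

import Mathlib

open Real


lemma polyfacts (t u : ℝ) (ht1 : 1 < t) (hu2 : t^2 ≤ u) (hu3 : u ≤ t^3) :
    0 < t^8*(u^2-1)*(t^8-u^2) ∧
    t^8*(u^2-1)*(t^8-u^2) < u^2*t^24 + u^2 - t^16 - u^4*t^8 ∧
    t^8 * (t^8*(u^2-1)*(t^8-u^2)) ≤ u^2*t^24 + u^2 - t^16 - u^4*t^8 ∧
    t^5*(u^2-1) ≤ u*(t^8-1) ∧ t^4 ≤ u^2 ∧ 1 < u := by
  have ht0 : (0:ℝ) < t := lt_trans one_pos ht1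
  have hu0 : (0:ℝ) < u := lt_of_lt_of_le (by nlinarith) hu2
  have hu1 : 1 < u := by nlinarith
  have hu24 : t^4 ≤ u^2 := by
    have := pow_le_pow_left₀ (by positivity : (0:ℝ) ≤ t^2) hu2 2
    nlinarith [this]
  have ht41 : 1 < t^4 := by nlinarith
  have hu21 : 1 < u^2 := by nlinarith
  have hu28 : u^2 < t^8 := by
    have h1 : u^2 ≤ t^3*u := by nlinarith
    have h2 : t^3*u ≤ t^6 := by nlinarith [pow_pos ht0 3]
    have h3 : t^6 < t^8 := by
      have := mul_pos (pow_pos ht0 6) (show (0:ℝ) < t^2-1 by nlinarith)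
      nlinarith [this]
    linarith
  have ht81 : 1 < t^8 := by nlinarith [pow_pos ht0 2, pow_pos ht0 4]
  have ht161 : 1 < t^16 := by nlinarith [pow_pos ht0 8]
  refine ⟨mul_pos (mul_pos (pow_pos ht0 8) (by linarith)) (by linarith), ?_, ?_, ?_, hu24, hu1⟩
  · have e : (u^2*t^24 + u^2 - t^16 - u^4*t^8) - t^8*(u^2-1)*(t^8-u^2)
        = u^2*(t^16-1)*(t^8-1) := by ring
    have : 0 < u^2*(t^16-1)*(t^8-1) :=
      mul_pos (mul_pos (by positivity) (by linarith)) (by linarith)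
    linarith
  · have e : (u^2*t^24 + u^2 - t^16 - u^4*t^8) - t^8*(t^8*(u^2-1)*(t^8-u^2))
        = (t^8-1)*(u^4*t^8 - u^2*(t^8+1) + t^16) := by ring
    have hQ : 0 ≤ u^4*t^8 - u^2*(t^8+1) + t^16 := by
      have g1 : 0 ≤ u^4*t^8 + t^16 - 2*(u^2*t^12) := by nlinarith [sq_nonneg (u^2*t^4 - t^8)]
      have g2 : u^2*t^8 ≤ u^2*t^12 := by
        have := mul_nonneg (mul_nonneg (sq_nonneg u) (le_of_lt (pow_pos ht0 8)))
          (show (0:ℝ) ≤ t^4-1 by nlinarith)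
        nlinarith [this]
      have g3 : u^2 ≤ u^2*t^12 := by
        have := mul_nonneg (sq_nonneg u)
          (show (0:ℝ) ≤ t^12-1 by nlinarith [pow_pos ht0 4, pow_pos ht0 12, mul_pos (pow_pos ht0 8) (pow_pos ht0 4)])
        nlinarith [this]
      linarith
    nlinarith [mul_nonneg (le_of_lt (by linarith : (0:ℝ) < t^8 - 1)) hQ]
  · have h35 : t^3 ≤ t^5 := by nlinarith [pow_pos ht0 3]
    nlinarith [mul_nonneg (mul_nonneg hu0.le ht0.le)
      (mul_nonneg (mul_nonneg (mul_nonneg ht0.le ht0.le) (mul_nonneg ht0.le ht0.le))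
        (by linarith : (0:ℝ) ≤ t^3 - u)),
      (by linarith : (0:ℝ) ≤ t^5 - u), pow_pos ht0 5]

set_option maxHeartbeats 1000000 in
lemma one_sub_cos_add_le (x y : ℝ) (hx0 : 0 ≤ x) (hx : x ≤ π/4) (hy0 : 0 ≤ y) (hy : y ≤ π/4) :
    1 - cos (x + y) ≤ (sin (2*x) + sin (2*y))^2 / 2 := by
  have hpi4 : (0:ℝ) ≤ π/4 := by positivity
  have hpi : π/4 ≤ π := by nlinarith [pi_pos]
  have hcx : Real.sqrt 2 / 2 ≤ cos x := by
    rw [← Real.cos_pi_div_four]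
    exact Real.cos_le_cos_of_nonneg_of_le_pi hx0 hpi hx
  have hcy : Real.sqrt 2 / 2 ≤ cos y := by
    rw [← Real.cos_pi_div_four]
    exact Real.cos_le_cos_of_nonneg_of_le_pi hy0 hpi hy
  have hs2 : Real.sqrt 2 ^ 2 = 2 := Real.sq_sqrt (by norm_num)
  have hs2n : (0:ℝ) ≤ Real.sqrt 2 := Real.sqrt_nonneg 2
  have hcx2 : (1:ℝ)/2 ≤ cos x ^ 2 := by nlinarith
  have hcy2 : (1:ℝ)/2 ≤ cos y ^ 2 := by nlinarith
  have hcc : (1:ℝ)/2 ≤ cos x * cos y := by nlinarith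
  have hcx0 : (0:ℝ) ≤ cos x := by nlinarith
  have hcy0 : (0:ℝ) ≤ cos y := by nlinarith
  have hsx : 0 ≤ sin x := sin_nonneg_of_nonneg_of_le_pi hx0 (by linarith)
  have hsy : 0 ≤ sin y := sin_nonneg_of_nonneg_of_le_pi hy0 (by linarith)
  have px := sin_sq_add_cos_sq x
  have py := sin_sq_add_cos_sq y
  have h1x : 1 - cos x ≤ sin x ^ 2 := by nlinarith
  have h1y : 1 - cos y ≤ sin y ^ 2 := by nlinarith
  rw [cos_add, sin_two_mul, sin_two_mul]
  clear hcx hcy hs2 hs2n hx hy hx0 hy0 hpi hpi4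
  have s1 : 1 - cos x * cos y ≤ sin x ^ 2 + sin y ^ 2 := by nlinarith
  have s2a : sin x ^ 2 ≤ 2 * sin x ^ 2 * cos x ^ 2 := by nlinarith [sq_nonneg (sin x)]
  have s2b : sin y ^ 2 ≤ 2 * sin y ^ 2 * cos y ^ 2 := by nlinarith [sq_nonneg (sin y)]
  have hab : 0 ≤ sin x * sin y := mul_nonneg hsx hsy
  have s2c : 2 * (sin x * sin y) ≤ 4 * (sin x * sin y) * (cos x * cos y) := by nlinarith
  nlinarith [s1, s2a, s2b, s2c, hab]

/-- The operator norm of a `3×3` real matrix acting on Euclidean `ℝ³`. -/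
noncomputable def opNorm3 (g : Matrix (Fin 3) (Fin 3) ℝ) : ℝ :=
  ‖LinearMap.toContinuousLinearMap (Matrix.toEuclideanLin (𝕜 := ℝ) g)‖

/-- `D_β = diag(e^β, e^{−β/2}, e^{−β/2})`. -/
noncomputable def Dmat (β : ℝ) : Matrix (Fin 3) (Fin 3) ℝ :=
  Matrix.diagonal ![exp β, exp (-β / 2), exp (-β / 2)]

/-- The rotation `x_δ` with first column `(δ, √(1−δ²), 0)`. -/
noncomputable def xmat (δ : ℝ) : Matrix (Fin 3) (Fin 3) ℝ :=
  !![δ, -sqrt (1 - δ ^ 2), 0;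
     sqrt (1 - δ ^ 2), δ, 0;
     0, 0, 1]

/-- The block rotation `diag(R(θ),1) ∈ SO(3)` (an element of `Ũ`). -/
noncomputable def rotU (θ : ℝ) : Matrix (Fin 3) (Fin 3) ℝ :=
  !![cos θ, -sin θ, 0;
     sin θ, cos θ, 0;
     0, 0, 1]

lemma opNorm3_rotU_sub_one (θ : ℝ) :
    opNorm3 (rotU θ - 1) ≤ Real.sqrt (2 - 2 * cos θ) := by
  have h2 : 0 ≤ 2 - 2 * cos θ := by nlinarith [Real.cos_le_one θ]
  apply ContinuousLinearMap.opNorm_le_bound _ (Real.sqrt_nonneg _)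
  intro x
  have hx : ∀ v : EuclideanSpace ℝ (Fin 3), ‖v‖ = Real.sqrt (v 0 ^ 2 + v 1 ^ 2 + v 2 ^ 2) := by
    intro v
    rw [EuclideanSpace.norm_eq]
    congr 1
    simp [Fin.sum_univ_three, sq_abs]
  rw [hx, hx, ← Real.sqrt_mul h2]
  apply Real.sqrt_le_sqrt
  have e : ∀ i, (LinearMap.toContinuousLinearMap (Matrix.toEuclideanLin (𝕜 := ℝ) (rotU θ - 1)) :
      EuclideanSpace ℝ (Fin 3) →L[ℝ] EuclideanSpace ℝ (Fin 3)) x i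
      = Matrix.mulVec (rotU θ - 1) (fun j => x j) i := fun i => rfl
  rw [e, e, e]
  simp only [rotU, Matrix.mulVec, dotProduct, Fin.sum_univ_three, Matrix.sub_apply,
    Matrix.one_apply, Matrix.cons_val', Matrix.cons_val_zero, Matrix.cons_val_one,
    Matrix.head_cons, Matrix.empty_val', Matrix.cons_val_fin_one, Matrix.head_fin_const]
  norm_num [Fin.ext_iff, Matrix.cons_val_two, Matrix.vecHead, Matrix.vecTail]
  nlinarith [Real.sin_sq_add_cos_sq θ, sq_nonneg (x 2), Real.cos_le_one θ, sq_nonneg (x 0), sq_nonneg (x 1)]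

set_option maxHeartbeats 2000000 in
/-- for `γ ≥ 0` and `α ∈ [γ, 7γ/6]` there exist `δ ∈ [0,1]` and block
rotations `k = diag(R,1)`, `k' = diag(R',1)` with
`D_{2γ−α} x_δ D_α = k · diag(e^γ, 1, e^{−γ}) · k'`, `δ ≤ e^{−γ}`, `‖k − I‖ ≤ 2e^{−γ/4}`
and `‖k' − I‖ ≤ 2e^{−γ/4}`. -/
theorem stmt14 (γ : ℝ) (hγ : 0 ≤ γ) (α : ℝ) (hα1 : γ ≤ α) (hα2 : α ≤ 7 * γ / 6) :
    ∃ δ : ℝ, 0 ≤ δ ∧ δ ≤ 1 ∧ ∃ θ θ' : ℝ,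
      Dmat (2 * γ - α) * xmat δ * Dmat α
        = rotU θ * Matrix.diagonal ![exp γ, 1, exp (-γ)] * rotU θ' ∧
      δ ≤ exp (-γ) ∧
      opNorm3 (rotU θ - 1) ≤ 2 * exp (-γ / 4) ∧
      opNorm3 (rotU θ' - 1) ≤ 2 * exp (-γ / 4) := by
  rcases eq_or_lt_of_le hγ with h0 | h0
  · -- γ = 0
    have hg : γ = 0 := h0.symm
    have ha : α = 0 := le_antisymm (by linarith) (by linarith)
    subst hg; subst ha
    refine ⟨1, by norm_num, le_refl 1, 0, 0, ?_, by norm_num, ?_, ?_⟩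
    · ext i j
      fin_cases i <;> fin_cases j <;>
        norm_num [Dmat, xmat, rotU, Matrix.mul_apply, Fin.sum_univ_three,
          Matrix.diagonal_apply, Matrix.one_apply, Matrix.vecMul,
          Matrix.vecHead, Matrix.vecTail, dotProduct, Matrix.cons_val, Matrix.cons_val_two]
    · refine le_trans (opNorm3_rotU_sub_one 0) ?_
      norm_num
    · refine le_trans (opNorm3_rotU_sub_one 0) ?_
      norm_num
  ·
    set t := exp (γ/4) with htdef
    set u := exp (3*α/2 - γ) with hudef
    have ht0 : 0 < t := exp_pos _
    have ht1 : 1 < t := Real.one_lt_exp_iff.mpr (by linarith)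
    have hu2 : t^2 ≤ u := by
      rw [htdef, hudef, ← Real.exp_nat_mul]
      exact exp_le_exp.mpr (by push_cast; linarith)
    have hu3 : u ≤ t^3 := by
      rw [htdef, hudef, ← Real.exp_nat_mul]
      exact exp_le_exp.mpr (by push_cast; linarith)
    have hu0 : 0 < u := exp_pos _
    obtain ⟨hNpos, hDN, hkey, hkey2, hu24, hu1⟩ := polyfacts t u ht1 hu2 hu3
    have ht41 : 1 < t^4 := one_lt_pow₀ ht1 (by norm_num)
    have ht41' : (0:ℝ) < t^4 - 1 := by linarith
    have ht410 : (0:ℝ) < t^4 + 1 := by linarith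
    have hγe : exp γ = t^4 := by
      rw [htdef, ← Real.exp_nat_mul]; push_cast; ring_nf
    have hγe' : exp (-γ) = 1 / t^4 := by
      rw [Real.exp_neg, hγe]; field_simp
    have hDpos : 0 < (u^2*t^24 + u^2 - t^16 - u^4*t^8) := lt_trans hNpos hDN
    have hD0 : (u^2*t^24 + u^2 - t^16 - u^4*t^8) ≠ 0 := ne_of_gt hDpos
    have hu0' : u ≠ 0 := ne_of_gt hu0
    have ht0' : t ≠ 0 := ne_of_gt ht0
    have hND1 : (t^8*(u^2-1)*(t^8-u^2)) / (u^2*t^24 + u^2 - t^16 - u^4*t^8) ≤ 1 := by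
      rw [div_le_one hDpos]; linarith
    have hND0 : 0 ≤ (t^8*(u^2-1)*(t^8-u^2)) / (u^2*t^24 + u^2 - t^16 - u^4*t^8) := le_of_lt (div_pos hNpos hDpos)
    set δ := Real.sqrt ((t^8*(u^2-1)*(t^8-u^2))/(u^2*t^24 + u^2 - t^16 - u^4*t^8)) with hδdef
    have hδ0 : 0 ≤ δ := Real.sqrt_nonneg _
    have hδsq : δ^2 = (t^8*(u^2-1)*(t^8-u^2))/(u^2*t^24 + u^2 - t^16 - u^4*t^8) := Real.sq_sqrt hND0
    have hδ1 : δ ≤ 1 := by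
      rw [hδdef]; exact Real.sqrt_le_one.mpr hND1
    have hδ21 : δ^2 ≤ 1 := by rw [hδsq]; exact hND1
    have hδγ : δ ≤ exp (-γ) := by
      rw [hγe', hδdef]
      have h1 : (t^8*(u^2-1)*(t^8-u^2))/(u^2*t^24 + u^2 - t^16 - u^4*t^8) ≤ (1/t^4)^2 := by
        rw [div_le_iff₀ hDpos, show ((1:ℝ)/t^4)^2 = 1/t^8 by ring, div_mul_eq_mul_div,
          le_div_iff₀ (pow_pos ht0 8)]
        linarith [hkey]
      calc Real.sqrt ((t^8*(u^2-1)*(t^8-u^2))/(u^2*t^24 + u^2 - t^16 - u^4*t^8)) ≤ Real.sqrt ((1/t^4)^2) := Real.sqrt_le_sqrt h1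
        _ = 1/t^4 := Real.sqrt_sq (by positivity)
    set s := Real.sqrt (1 - δ^2) with hsdef
    have hs0 : 0 ≤ s := Real.sqrt_nonneg _
    have hssq : s^2 = 1 - δ^2 := Real.sq_sqrt (by linarith)
    have hs1 : s ≤ 1 := by
      rw [hsdef]; exact Real.sqrt_le_one.mpr (by linarith [sq_nonneg δ])
    have hδs1 : δ^2 + s^2 = 1 := by rw [hssq]; ring
    have hδD : δ^2 * (u^2*t^24 + u^2 - t^16 - u^4*t^8) = (t^8*(u^2-1)*(t^8-u^2)) := by rw [hδsq]; exact div_mul_cancel₀ _ hD0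
    have hsD : s^2 * (u^2*t^24 + u^2 - t^16 - u^4*t^8) = (u^2*t^24 + u^2 - t^16 - u^4*t^8) - (t^8*(u^2-1)*(t^8-u^2)) := by
      rw [hssq, hδsq, sub_mul, div_mul_cancel₀ _ hD0, one_mul]
    set p := t^8*δ with hpdef
    set w := δ/t^4 with hwdef
    set q := t^4*s/u with hqdef
    set r := u*s with hrdef
    have hp0 : 0 ≤ p := by positivity
    have hw0 : 0 ≤ w := by positivity
    have hq0 : 0 ≤ q := by positivity
    have hr0 : 0 ≤ r := by positivity
    have hwp : w ≤ p := by
      rw [hpdef, hwdef, div_le_iff₀ (by positivity)]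
      have h12 : (1:ℝ) ≤ t^12 := one_le_pow₀ (le_of_lt ht1)
      have := mul_le_mul_of_nonneg_left h12 hδ0
      linarith
    have hqr : q ≤ r := by
      rw [hqdef, hrdef, div_le_iff₀ hu0]
      have := mul_le_mul_of_nonneg_left hu24 hs0
      linarith
    have hdet : p*w + q*r = t^4 := by
      rw [hpdef, hwdef, hqdef, hrdef]
      field_simp
      linear_combination hδs1
    have hF : p^2 + q^2 + r^2 + w^2 = t^8 + 1 := by
      rw [hpdef, hwdef, hqdef, hrdef]
      field_simp
      ring_nf
      have hmain : (t ^ 8 * u ^ 4 * s ^ 2 + t ^ 16 * s ^ 2 + t ^ 24 * δ ^ 2 * u ^ 2 + δ ^ 2 * u ^ 2) * (u^2*t^24 + u^2 - t^16 - u^4*t^8)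
          = (t ^ 8 * u ^ 2 + t ^ 16 * u ^ 2) * (u^2*t^24 + u^2 - t^16 - u^4*t^8) := by
        linear_combination (t^8*u^4 + t^16) * hsD + (t^24*u^2 + u^2) * hδD
      exact mul_right_cancel₀ hD0 hmain
    have hIφ : (p+w)^2 + (r+q)^2 = (t^4+1)^2 := by linear_combination hF + 2*hdet
    have hIψ : (p-w)^2 + (r-q)^2 = (t^4-1)^2 := by linear_combination hF - 2*hdet
    have hrq1 : r + q ≤ t^4 + 1 := by
      have h1 : (r+q)^2 ≤ (t^4+1)^2 := by linarith [sq_nonneg (p+w)]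
      exact (pow_le_pow_iff_left₀ (by linarith) (by linarith) (by norm_num)).mp h1
    have hrq2 : r - q ≤ t^4 - 1 := by
      have h1 : (r-q)^2 ≤ (t^4-1)^2 := by linarith [sq_nonneg (p-w)]
      exact (pow_le_pow_iff_left₀ (by linarith) (by linarith) (by norm_num)).mp h1
    set Sφ := (r+q)/(t^4+1) with hSφdef
    set Sψ := (r-q)/(t^4-1) with hSψdef
    have hSφ0 : 0 ≤ Sφ := by positivity
    have hSψ0 : 0 ≤ Sψ := div_nonneg (by linarith) (by linarith)
    have hSφ1 : Sφ ≤ 1 := by rw [hSφdef, div_le_one ht410]; linarith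
    have hSψ1 : Sψ ≤ 1 := by rw [hSψdef, div_le_one ht41']; linarith
    set φ := Real.arcsin Sφ with hφdef
    set ψ := Real.arcsin Sψ with hψdef
    have hsinφ : sin φ = Sφ := Real.sin_arcsin (by linarith) hSφ1
    have hsinψ : sin ψ = Sψ := Real.sin_arcsin (by linarith) hSψ1
    have hφ0 : 0 ≤ φ := Real.arcsin_nonneg.mpr hSφ0
    have hψ0 : 0 ≤ ψ := Real.arcsin_nonneg.mpr hSψ0
    have hφπ : φ ≤ π/2 := Real.arcsin_le_pi_div_two _
    have hψπ : ψ ≤ π/2 := Real.arcsin_le_pi_div_two _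
    have hcosφ : cos φ = (p+w)/(t^4+1) := by
      rw [hφdef, Real.cos_arcsin]
      rw [show 1 - Sφ^2 = ((p+w)/(t^4+1))^2 by
        rw [hSφdef, div_pow, div_pow, eq_div_iff (by positivity), sub_mul,
          div_mul_cancel₀ _ (by positivity : ((t^4+1)^2 : ℝ) ≠ 0)]
        linarith [hIφ]]
      exact Real.sqrt_sq (by positivity)
    have hcosψ : cos ψ = (p-w)/(t^4-1) := by
      rw [hψdef, Real.cos_arcsin]
      rw [show 1 - Sψ^2 = ((p-w)/(t^4-1))^2 by
        rw [hSψdef, div_pow, div_pow, eq_div_iff (by positivity : ((t^4-1)^2 : ℝ) ≠ 0), sub_mul,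
          div_mul_cancel₀ _ (by positivity : ((t^4-1)^2 : ℝ) ≠ 0)]
        linarith [hIψ]]
      exact Real.sqrt_sq (div_nonneg (by linarith) (by linarith))
    have E1 : (t^4+1) * cos φ = p + w := by
      rw [hcosφ, mul_comm, div_mul_cancel₀ _ (ne_of_gt ht410)]
    have E2 : (t^4+1) * sin φ = r + q := by
      rw [hsinφ, hSφdef, mul_comm, div_mul_cancel₀ _ (ne_of_gt ht410)]
    have E3 : (t^4-1) * cos ψ = p - w := by
      rw [hcosψ, mul_comm, div_mul_cancel₀ _ (ne_of_gt ht41')]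
    have E4 : (t^4-1) * sin ψ = r - q := by
      rw [hsinψ, hSψdef, mul_comm, div_mul_cancel₀ _ (ne_of_gt ht41')]
    -- sum bound
    have hsum : sin φ + sin ψ ≤ 2/t := by
      rw [hsinφ, hsinψ, hSφdef, hSψdef]
      have hden : (0:ℝ) < u*t*((t^4+1)*(t^4-1)) := by positivity
      rw [div_add_div _ _ (ne_of_gt ht410) (ne_of_gt ht41'),
        div_le_div_iff₀ (mul_pos ht410 ht41') ht0]
      have expand : ((r+q)*(t^4-1) + (r-q)*(t^4+1)) * t * u = 2*t^5*s*(u^2-1) := by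
        rw [hrdef, hqdef]; field_simp; ring
      have expand2 : 2*((t^4+1)*(t^4-1)) * u = 2*u*(t^8-1) := by ring
      have hs' : 2*t^5*s*(u^2-1) ≤ 2*u*(t^8-1) := by
        have hpos : (0:ℝ) ≤ t^5*(u^2-1) := by
          have : (0:ℝ) ≤ u^2 - 1 := by linarith
          positivity
        have h1 : t^5*s*(u^2-1) ≤ t^5*(u^2-1) := by
          have h2 := mul_le_mul_of_nonneg_right hs1 hpos
          linarith [h2]
        linarith [hkey2]
      have hfin : (((r+q)*(t^4-1) + (t^4+1)*(r-q)) * t) * u ≤ (2*((t^4+1)*(t^4-1))) * u := by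
        have e1 : (((r+q)*(t^4-1) + (t^4+1)*(r-q)) * t) * u = 2*t^5*s*(u^2-1) := by
          linear_combination expand
        rw [e1, expand2]
        exact hs'
      exact le_of_mul_le_mul_right hfin hu0
    have hcosb : 1 - cos ((φ+ψ)/2) ≤ 2/t^2 := by
      have h := one_sub_cos_add_le (φ/2) (ψ/2) (by linarith) (by linarith) (by linarith) (by linarith)
      rw [show 2*(φ/2) = φ by ring, show 2*(ψ/2) = ψ by ring] at h
      have hnn : 0 ≤ sin φ + sin ψ := by rw [hsinφ, hsinψ]; linarith
      have h2 : (sin φ + sin ψ)^2 ≤ (2/t)^2 := pow_le_pow_left₀ hnn hsum 2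
      rw [show (φ+ψ)/2 = φ/2 + ψ/2 by ring]
      calc 1 - cos (φ/2+ψ/2) ≤ (sin φ + sin ψ)^2/2 := h
        _ ≤ (2/t)^2/2 := by linarith
        _ = 2/t^2 := by ring
    have hcosb' : 1 - cos ((φ-ψ)/2) ≤ 2/t^2 := by
      have habs : |(φ-ψ)/2| ≤ (φ+ψ)/2 := abs_le.mpr ⟨by linarith, by linarith⟩
      have hmono : cos ((φ+ψ)/2) ≤ cos |(φ-ψ)/2| :=
        Real.cos_le_cos_of_nonneg_of_le_pi (abs_nonneg _)
          (by linarith [Real.pi_pos]) habs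
      rw [← Real.cos_abs ((φ-ψ)/2)]
      linarith
    have hnorm : ∀ x : ℝ, 1 - cos x ≤ 2/t^2 → opNorm3 (rotU x - 1) ≤ 2 * exp (-γ/4) := by
      intro x hx
      refine le_trans (opNorm3_rotU_sub_one x) ?_
      have h1 : 2 - 2*cos x ≤ (2/t)^2 := by
        have e : (2/t)^2 = 2*(2/t^2) := by ring
        rw [e]; linarith
      calc Real.sqrt (2 - 2*cos x) ≤ Real.sqrt ((2/t)^2) := Real.sqrt_le_sqrt h1
        _ = 2/t := Real.sqrt_sq (by positivity)
        _ = 2 * exp (-γ/4) := by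
            rw [show -γ/4 = -(γ/4) by ring, Real.exp_neg, ← htdef]; ring
    refine ⟨δ, hδ0, hδ1, (φ+ψ)/2, (φ-ψ)/2, ?_, hδγ, hnorm _ hcosb, hnorm _ hcosb'⟩
    have hadd : (φ+ψ)/2 + (φ-ψ)/2 = φ := by ring
    have hsub : (φ+ψ)/2 - (φ-ψ)/2 = ψ := by ring
    rw [← hadd] at E1 E2
    rw [← hsub] at E3 E4
    rw [Real.cos_add] at E1
    rw [Real.sin_add] at E2
    rw [Real.cos_sub] at E3
    rw [Real.sin_sub] at E4
    have a1 : exp (2*γ-α) * exp α = t^8 := by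
      rw [← Real.exp_add, show 2*γ-α+α = γ+γ by ring, Real.exp_add, hγe]; ring
    have a2 : exp (2*γ-α) * exp (-α/2) * u = t^4 := by
      rw [hudef, ← Real.exp_add, ← Real.exp_add, show 2*γ-α + (-α/2) + (3*α/2-γ) = γ by ring, hγe]
    have a2' : exp (2*γ-α) * exp (-α/2) = t^4/u := by
      rw [eq_div_iff hu0']; exact a2
    have a3 : exp ((α-2*γ)/2) * exp α = u := by
      rw [hudef, ← Real.exp_add]; congr 1; ring
    have a4 : exp ((α-2*γ)/2) * exp (-α/2) * t^4 = 1 := by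
      rw [htdef, ← Real.exp_nat_mul, ← Real.exp_add, ← Real.exp_add,
        show (α-2*γ)/2 + (-α/2) + (4:ℕ)*(γ/4) = 0 by push_cast; ring]
      exact Real.exp_zero
    have a4' : exp ((α-2*γ)/2) * exp (-α/2) = 1/t^4 := by
      rw [eq_div_iff (ne_of_gt (pow_pos ht0 4))]; exact a4
    have a5 : exp ((α-2*γ)/2) * exp (-α/2) = exp (-γ) := by
      rw [← Real.exp_add]; congr 1; ring
    have hsδ : Real.sqrt (1 - δ^2) = s := by rw [hsdef]
    ext i j
    fin_cases i <;> fin_cases j <;>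
      norm_num [Dmat, xmat, rotU, Matrix.mul_apply, Fin.sum_univ_three,
        Matrix.diagonal_apply, hsδ, Matrix.vecMul, Matrix.vecHead,
        Matrix.vecTail, dotProduct, Matrix.cons_val, Matrix.cons_val_two]
    · linear_combination δ*a1 - cos ((φ+ψ)/2)*cos ((φ-ψ)/2)*hγe - (E1+E3)/2 - hpdef
    · linear_combination (-s)*a2' + cos ((φ+ψ)/2)*sin ((φ-ψ)/2)*hγe + (E2-E4)/2 + hqdef
    · linear_combination s*a3 - sin ((φ+ψ)/2)*cos ((φ-ψ)/2)*hγe - (E2+E4)/2 - hrdef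
    · linear_combination δ*a4' + sin ((φ+ψ)/2)*sin ((φ-ψ)/2)*hγe - (E1-E3)/2 - hwdef
    · exact a5
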